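/- Let λ⁰ : ℝ × ℝ³ → ℝ be continuous and K^A : ℝ × ℝ³ → ℝ (A = 1, 2, 3; arguments (ϑ̃, q¹, q², q³)) be twice continuously differentiable, and suppose that for all (ϑ̃, q) and all A, B ∈ {1,2,3}: ∂K^A/∂q^B (ϑ̃, q) = δ^A_B · λ⁰(ϑ̃, q). Then λ⁰ does not depend on q, i.e. λ⁰(ϑ̃, q) = λ⁰(ϑ̃, 0) for all q, and there exist functions K̃^A : ℝ → ℝ such that K^A(ϑ̃, q) = λ⁰(ϑ̃, 0) · q^A + K̃^A(ϑ̃) for all (ϑ̃, q) and all A. -/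

import Mathlib

lemma curve_deriv (F : ℝ × (Fin 3 → ℝ) → ℝ) (hF : Differentiable ℝ F)
    (ϑ : ℝ) (q v : Fin 3 → ℝ) (t : ℝ) :
    HasDerivAt (fun s : ℝ => F (ϑ, q + s • v)) (fderiv ℝ F (ϑ, q + t • v) ((0:ℝ), v)) t := by
  have h1 : HasDerivAt (fun s : ℝ => q + s • v) v t := by
    simpa using ((hasDerivAt_id t).smul_const v).const_add q
  have h2 : HasDerivAt (fun s : ℝ => ((ϑ, q + s • v) : ℝ × (Fin 3 → ℝ))) ((0:ℝ), v) t :=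
    (hasDerivAt_const t ϑ).prodMk h1
  exact (hF _).hasFDerivAt.comp_hasDerivAt t h2

lemma span3 (q : Fin 3 → ℝ) (A : Fin 3) :
    q = (q A • (Pi.single A 1 : Fin 3 → ℝ) + q (A+1) • (Pi.single (A+1) 1 : Fin 3 → ℝ))
        + q (A+2) • (Pi.single (A+2) 1 : Fin 3 → ℝ) := by
  funext i
  fin_cases A <;> fin_cases i <;> simp [Pi.single_apply]

/-- the spatial-flux subsystem of the Lagrange–Liu system for the
Cattaneo system.  If `∂K^A/∂q^B = δ^A_B λ⁰` at every point `(ϑ̃, q) ∈ ℝ × ℝ³`, then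
`λ⁰` does not depend on `q` and `K^A(ϑ̃, q) = λ⁰(ϑ̃, 0) q^A + K̃^A(ϑ̃)` for some
functions `K̃^A` of `ϑ̃` alone. -/
theorem stmt_17 (lam0 : ℝ × (Fin 3 → ℝ) → ℝ) (hlam0 : Continuous lam0)
    (K : Fin 3 → ℝ × (Fin 3 → ℝ) → ℝ) (hK : ∀ A, ContDiff ℝ 2 (K A))
    (hgrad : ∀ (p : ℝ × (Fin 3 → ℝ)) (A B : Fin 3),
      fderiv ℝ (K A) p ((0 : ℝ), Pi.single B 1) = if A = B then lam0 p else 0) :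
    (∀ (ϑ : ℝ) (q : Fin 3 → ℝ), lam0 (ϑ, q) = lam0 (ϑ, 0)) ∧
      ∃ Kt : Fin 3 → ℝ → ℝ, ∀ (ϑ : ℝ) (q : Fin 3 → ℝ) (A : Fin 3),
        K A (ϑ, q) = lam0 (ϑ, 0) * q A + Kt A ϑ := by
  have hKd : ∀ A, Differentiable ℝ (K A) := fun A => (hK A).differentiable (by norm_num)
  -- K A is constant in direction B for B ≠ A
  have constdir : ∀ (A B : Fin 3), A ≠ B → ∀ (ϑ : ℝ) (q : Fin 3 → ℝ) (t : ℝ),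
      K A (ϑ, q + t • (Pi.single B 1 : Fin 3 → ℝ)) = K A (ϑ, q) := by
    intro A B hAB ϑ q t
    have hd : ∀ s : ℝ, HasDerivAt (fun s : ℝ => K A (ϑ, q + s • (Pi.single B 1 : Fin 3 → ℝ)))
        0 s := by
      intro s
      have := curve_deriv (K A) (hKd A) ϑ q (Pi.single B 1) s
      rwa [hgrad _ A B, if_neg hAB] at this
    have hc := is_const_of_deriv_eq_zero (f := fun s : ℝ =>
        K A (ϑ, q + s • (Pi.single B 1 : Fin 3 → ℝ)))
      (fun s => (hd s).differentiableAt) (fun s => (hd s).deriv) t 0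
    simpa using hc
  -- K A depends only on q A
  have reduce : ∀ (A : Fin 3) (ϑ : ℝ) (q : Fin 3 → ℝ),
      K A (ϑ, q) = K A (ϑ, q A • (Pi.single A 1 : Fin 3 → ℝ)) := by
    intro A ϑ q
    have h1 : A ≠ A + 1 := by fin_cases A <;> decide
    have h2 : A ≠ A + 2 := by fin_cases A <;> decide
    calc K A (ϑ, q) = K A (ϑ, (q A • (Pi.single A 1 : Fin 3 → ℝ)
          + q (A+1) • (Pi.single (A+1) 1 : Fin 3 → ℝ))
          + q (A+2) • (Pi.single (A+2) 1 : Fin 3 → ℝ)) := by rw [← span3]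
      _ = K A (ϑ, q A • (Pi.single A 1 : Fin 3 → ℝ)
          + q (A+1) • (Pi.single (A+1) 1 : Fin 3 → ℝ)) := constdir A (A+2) h2 ϑ _ _
      _ = K A (ϑ, q A • (Pi.single A 1 : Fin 3 → ℝ)) := constdir A (A+1) h1 ϑ _ _
  -- derivative along direction A
  have dirA : ∀ (A : Fin 3) (ϑ : ℝ) (q : Fin 3 → ℝ) (t : ℝ),
      HasDerivAt (fun s : ℝ => K A (ϑ, q + s • (Pi.single A 1 : Fin 3 → ℝ)))
        (lam0 (ϑ, q + t • (Pi.single A 1 : Fin 3 → ℝ))) t := by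
    intro A ϑ q t
    have := curve_deriv (K A) (hKd A) ϑ q (Pi.single A 1) t
    rwa [hgrad _ A A, if_pos rfl] at this
  -- lam0 depends only on q A, for each A
  have lamred : ∀ (A : Fin 3) (ϑ : ℝ) (q : Fin 3 → ℝ),
      lam0 (ϑ, q) = lam0 (ϑ, q A • (Pi.single A 1 : Fin 3 → ℝ)) := by
    intro A ϑ q
    have e : (fun s : ℝ => K A (ϑ, q + s • (Pi.single A 1 : Fin 3 → ℝ)))
        = fun s : ℝ => K A (ϑ, q A • (Pi.single A 1 : Fin 3 → ℝ)
            + s • (Pi.single A 1 : Fin 3 → ℝ)) := by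
      funext s
      rw [reduce A ϑ (q + s • (Pi.single A 1 : Fin 3 → ℝ)),
          reduce A ϑ (q A • (Pi.single A 1 : Fin 3 → ℝ) + s • (Pi.single A 1 : Fin 3 → ℝ))]
      congr 2
      simp [add_smul]
    have h1 := dirA A ϑ q 0
    have h2 := dirA A ϑ (q A • (Pi.single A 1 : Fin 3 → ℝ)) 0
    rw [← e] at h2
    have := h1.unique h2
    simpa using this
  -- lam0 is independent of q
  have lamconst : ∀ (ϑ : ℝ) (q : Fin 3 → ℝ), lam0 (ϑ, q) = lam0 (ϑ, 0) := by
    intro ϑ q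
    have h0 := lamred 0 ϑ q
    have h1 := lamred 1 ϑ (q 0 • (Pi.single 0 1 : Fin 3 → ℝ))
    rw [h0, h1]
    norm_num
  refine ⟨lamconst, ⟨fun A ϑ => K A (ϑ, 0), ?_⟩⟩
  intro ϑ q A
  -- integrate along direction A
  have hd : ∀ s : ℝ, HasDerivAt
      (fun s : ℝ => K A (ϑ, (0 : Fin 3 → ℝ) + s • (Pi.single A 1 : Fin 3 → ℝ))
        - lam0 (ϑ, 0) * s) 0 s := by
    intro s
    have h1 := dirA A ϑ 0 s
    have h2 : HasDerivAt (fun s : ℝ => lam0 (ϑ, (0:Fin 3 → ℝ)) * s) (lam0 (ϑ, 0)) s := by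
      simpa using (hasDerivAt_id s).const_mul (lam0 (ϑ, (0:Fin 3 → ℝ)))
    have hval : lam0 (ϑ, (0:Fin 3 → ℝ) + s • (Pi.single A 1 : Fin 3 → ℝ)) - lam0 (ϑ, 0) = 0 := by
      rw [lamconst ϑ ((0:Fin 3 → ℝ) + s • (Pi.single A 1 : Fin 3 → ℝ))]; ring
    have := h1.sub h2
    rwa [hval] at this
  have hc := is_const_of_deriv_eq_zero (f := fun s : ℝ =>
      K A (ϑ, (0 : Fin 3 → ℝ) + s • (Pi.single A 1 : Fin 3 → ℝ)) - lam0 (ϑ, 0) * s)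
    (fun s => (hd s).differentiableAt) (fun s => (hd s).deriv) (q A) 0
  simp only [zero_add, zero_smul, smul_zero, mul_zero, sub_zero] at hc
  have := reduce A ϑ q
  rw [this]
  linarith [hc]
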